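/- arXiv:2102.04297 — 3 statements merged into one kernel-verified Lean document; each statement's English description precedes it below -/
import Mathlib

section
/- Let g : I → ℝ be a C² function on an open interval I with |g''(x)| ≤ C for all x ∈ I. Given η > 0, real numbers x, x̃ ∈ I, a finite sequence z₁,…,zₙ of real numbers, and the two sequences defined by x₀ = x, x_k = x_{k-1} - η g'(x_{k-1}) + η z_k, and x̃₀ = x̃, x̃_k = x̃_{k-1} - η g'(x̃_{k-1}), suppose all iterates x_k, x̃_k lie in I, and suppose there is c̃ > 0 such that η|z₁ + ⋯ + z_k| + |x - x̃| ≤ c̃ for all k = 1,…,n. Then |x_k - x̃_k| ≤ c̃ · exp(η C k) for all k = 1,…,n. -/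
open Filter Set

/-- Discrete Gronwall-type estimate: a perturbed gradient descent recursion stays within
`c̃ · exp(ηCk)` of the unperturbed one, provided the cumulative perturbations plus the initial
gap are bounded by `c̃`. -/
theorem stmt2 (I : Set ℝ) (hIopen : IsOpen I) (hIconn : I.OrdConnected)
    (g : ℝ → ℝ) (C : ℝ)
    (hg : ContDiffOn ℝ 2 g I)
    (hC : ∀ x ∈ I, |deriv (deriv g) x| ≤ C)
    (η : ℝ) (hη : 0 < η)
    (n : ℕ) (z : ℕ → ℝ) (x xt : ℕ → ℝ)
    (hx : ∀ k < n, x (k + 1) = x k - η * deriv g (x k) + η * z (k + 1))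
    (hxt : ∀ k < n, xt (k + 1) = xt k - η * deriv g (xt k))
    (hmem : ∀ k ≤ n, x k ∈ I ∧ xt k ∈ I)
    (ct : ℝ) (hct : 0 < ct)
    (hbound : ∀ k, 1 ≤ k → k ≤ n →
      η * |∑ j ∈ Finset.Icc 1 k, z j| + |x 0 - xt 0| ≤ ct) :
    ∀ k, 1 ≤ k → k ≤ n → |x k - xt k| ≤ ct * Real.exp (η * C * k) := by
  intro k hk1 hkn
  have hn1 : 1 ≤ n := hk1.trans hkn
  have hx0I : x 0 ∈ I := (hmem 0 (Nat.zero_le n)).1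
  have hC0 : 0 ≤ C := (abs_nonneg _).trans (hC _ hx0I)
  have hconv : Convex ℝ I := convex_iff_ordConnected.2 hIconn
  have hg1 : ContDiffOn ℝ 1 (deriv g) I := hg.deriv_of_isOpen hIopen (by norm_num)
  have hderiv : ∀ a ∈ I, HasDerivWithinAt (deriv g) (deriv (deriv g) a) I a := by
    intro a ha
    exact (((hg1.differentiableOn one_ne_zero).differentiableAt
      (hIopen.mem_nhds ha)).hasDerivAt).hasDerivWithinAt
  have hlip : ∀ a ∈ I, ∀ b ∈ I, |deriv g a - deriv g b| ≤ C * |a - b| := by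
    intro a ha b hb
    have := hconv.norm_image_sub_le_of_norm_hasDerivWithin_le hderiv
      (fun y hy => by simpa [Real.norm_eq_abs] using hC y hy) hb ha
    simpa [Real.norm_eq_abs] using this
  -- telescoping identity
  have htel : ∀ m, m ≤ n → x m - xt m = (x 0 - xt 0) + η * (∑ j ∈ Finset.Icc 1 m, z j)
      - η * ∑ j ∈ Finset.range m, (deriv g (x j) - deriv g (xt j)) := by
    intro m hm
    induction m with
    | zero => simp
    | succ m ih =>
      have hm' : m ≤ n := Nat.le_of_succ_le hm
      rw [hx m (by omega), hxt m (by omega),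
        Finset.sum_Icc_succ_top (by omega : 1 ≤ m + 1), Finset.sum_range_succ]
      have := ih hm'
      linarith
  have hb0 : |x 0 - xt 0| ≤ ct := by
    have h := hbound 1 le_rfl hn1
    nlinarith [abs_nonneg (∑ j ∈ Finset.Icc 1 1, z j), hη.le]
  -- Gronwall bound
  have main : ∀ m, m ≤ n → |x m - xt m| ≤ ct * (1 + η * C) ^ m := by
    intro m
    induction m using Nat.strong_induction_on with
    | _ m ih =>
      intro hm
      match m with
      | 0 => simpa using hb0
      | Nat.succ m =>
        have hsum : ∑ j ∈ Finset.range (m + 1), |deriv g (x j) - deriv g (xt j)|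
            ≤ ∑ j ∈ Finset.range (m + 1), C * (ct * (1 + η * C) ^ j) := by
          apply Finset.sum_le_sum
          intro j hj
          have hjm : j < m + 1 := Finset.mem_range.1 hj
          have hjn : j ≤ n := by omega
          calc |deriv g (x j) - deriv g (xt j)|
              ≤ C * |x j - xt j| := hlip _ (hmem j hjn).1 _ (hmem j hjn).2
            _ ≤ C * (ct * (1 + η * C) ^ j) := by
                exact mul_le_mul_of_nonneg_left (ih j hjm hjn) hC0
        have hgeo : (η * C) * ∑ j ∈ Finset.range (m + 1), (1 + η * C) ^ j
            = (1 + η * C) ^ (m + 1) - 1 := by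
          have := geom_sum_mul (1 + η * C) (m + 1)
          have h1 : (1 + η * C) - 1 = η * C := by ring
          rw [h1] at this
          linarith [this]
        calc |x (m + 1) - xt (m + 1)|
            = |(x 0 - xt 0) + η * (∑ j ∈ Finset.Icc 1 (m + 1), z j)
              - η * ∑ j ∈ Finset.range (m + 1), (deriv g (x j) - deriv g (xt j))| := by
              rw [htel (m + 1) hm]
          _ ≤ |(x 0 - xt 0) + η * (∑ j ∈ Finset.Icc 1 (m + 1), z j)|
              + |η * ∑ j ∈ Finset.range (m + 1), (deriv g (x j) - deriv g (xt j))| :=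
              abs_sub _ _
          _ ≤ (|x 0 - xt 0| + η * |∑ j ∈ Finset.Icc 1 (m + 1), z j|)
              + η * ∑ j ∈ Finset.range (m + 1), |deriv g (x j) - deriv g (xt j)| := by
              gcongr
              · exact (abs_add_le _ _).trans (by rw [abs_mul, abs_of_pos hη])
              · rw [abs_mul, abs_of_pos hη]
                exact mul_le_mul_of_nonneg_left (Finset.abs_sum_le_sum_abs _ _) hη.le
          _ ≤ ct + η * ∑ j ∈ Finset.range (m + 1), C * (ct * (1 + η * C) ^ j) := by
              have hb := hbound (m + 1) (by omega) hm
              gcongr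
              linarith [hb]
          _ = ct + ct * ((η * C) * ∑ j ∈ Finset.range (m + 1), (1 + η * C) ^ j) := by
              rw [← Finset.mul_sum, ← Finset.mul_sum]; ring
          _ = ct * (1 + η * C) ^ (m + 1) := by rw [hgeo]; ring
  have hpow : (1 + η * C) ^ k ≤ Real.exp (η * C * k) := by
    have h1 : (1 + η * C) ^ k ≤ Real.exp (η * C) ^ k := by
      apply pow_le_pow_left₀ (by positivity)
      linarith [Real.add_one_le_exp (η * C)]
    calc (1 + η * C) ^ k ≤ Real.exp (η * C) ^ k := h1
      _ = Real.exp (η * C * k) := by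
          rw [← Real.exp_nat_mul]; ring_nf
  calc |x k - xt k| ≤ ct * (1 + η * C) ^ k := main k hkn
    _ ≤ ct * Real.exp (η * C * k) := mul_le_mul_of_nonneg_left hpow hct.le
end

section
/- For each n ≥ 1 let Y^n be the ((U^n_j)_{j≥0}, (V^n_j)_{j≥0}) jump process and let Y be the ((U_j)_{j≥0}, (V_j)_{j≥0}) jump process. Suppose: (i) U₀ ≡ 0; (ii) the sequence (U^n_0, V^n_0, U^n_1, V^n_1, …) converges in distribution to (0, V_0, U_1, V_1, …); (iii) for every x > 0 and every n ≥ 1, P(U_1 + ⋯ + U_n = x) = 0; (iv) for every x > 0, lim_{n→∞} P(U_1 + ⋯ + U_n > x) = 1. Then for any k ∈ ℕ and any 0 < t_1 < ⋯ < t_k < ∞, the vector (Y^n_{t_1}, …, Y^n_{t_k}) converges in distribution to (Y_{t_1}, …, Y_{t_k}). -/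
open MeasureTheory ProbabilityTheory Filter Set
open scoped Topology ENNReal

/-- The `((U_j), (V_j))` jump process: `Y_t = 0` for `t < U₀`, and otherwise
`Y_t = Σ_j V_j 1_{[U₀+⋯+U_j, U₀+⋯+U_{j+1})}(t)`. -/
noncomputable def jumpProcess (U V : ℕ → ℝ) (t : ℝ) : ℝ :=
  if t < U 0 then 0
  else ∑' j : ℕ,
    V j * Set.indicator
      (Set.Ico (∑ i ∈ Finset.range (j + 1), U i) (∑ i ∈ Finset.range (j + 2), U i))
      (fun _ => (1 : ℝ)) t

open scoped Classical

namespace Stmt8Aux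

/-- Partial sums of the clamped even coordinates. -/
def P (s : ℕ → ℝ) (m : ℕ) : ℝ := ∑ i ∈ Finset.range m, max (s (2 * i)) 0

lemma P_mono (s : ℕ → ℝ) : Monotone (P s) := by
  intro a b hab
  exact Finset.sum_le_sum_of_subset_of_nonneg (Finset.range_subset_range.mpr hab)
    (fun i _ _ => le_max_right _ _)

lemma continuous_P (m : ℕ) : Continuous fun s : ℕ → ℝ => P s m := by
  unfold P
  exact continuous_finset_sum _ fun i _ =>
    ((continuous_apply (2 * i)).max continuous_const)

lemma measurable_P (m : ℕ) : Measurable fun s : ℕ → ℝ => P s m :=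
  (continuous_P m).measurable

def Q (t : ℝ) (j : ℕ) (s : ℕ → ℝ) : Prop := P s (j + 1) ≤ t ∧ t < P s (j + 2)

lemma Q_unique {t : ℝ} {j j' : ℕ} {s : ℕ → ℝ} (h : Q t j s) (h' : Q t j' s) : j = j' := by
  by_contra hne
  rcases Nat.lt_or_ge j j' with hlt | hge
  · exact absurd (h.2.trans_le ((P_mono s (by omega : j + 2 ≤ j' + 1)).trans h'.1)) (lt_irrefl t)
  · have hlt : j' < j := by omega
    exact absurd (h'.2.trans_le ((P_mono s (by omega : j' + 2 ≤ j + 1)).trans h.1)) (lt_irrefl t)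

lemma measurableSet_Q (t : ℝ) (j : ℕ) : MeasurableSet {s : ℕ → ℝ | Q t j s} := by
  exact ((measurable_P (j+1)) measurableSet_Iic).inter ((measurable_P (j+2)) measurableSet_Ioi)

noncomputable def g (t : ℝ) (s : ℕ → ℝ) : ℝ :=
  if h : ∃ j, Q t j s then s (2 * Nat.find h + 1) else 0

lemma g_eq {t : ℝ} {s : ℕ → ℝ} {j : ℕ} (hj : Q t j s) : g t s = s (2 * j + 1) := by
  have hex : ∃ j, Q t j s := ⟨j, hj⟩
  rw [g, dif_pos hex, Q_unique (Nat.find_spec hex) hj]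

lemma g_eq_zero {t : ℝ} {s : ℕ → ℝ} (h : ¬ ∃ j, Q t j s) : g t s = 0 := dif_neg h

lemma measurable_g (t : ℝ) : Measurable (g t) := by
  have key : ∀ s : ℕ → ℝ, Tendsto
      (fun N => ∑ j ∈ Finset.range N, (if Q t j s then s (2 * j + 1) else 0))
      atTop (𝓝 (g t s)) := by
    intro s
    by_cases h : ∃ j, Q t j s
    · obtain ⟨j₀, hj₀⟩ := h
      rw [g_eq hj₀]
      apply tendsto_atTop_of_eventually_const (i₀ := j₀ + 1)
      intro N hN
      rw [Finset.sum_eq_single j₀]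
      · rw [if_pos hj₀]
      · intro j _ hne
        exact if_neg (fun hj => hne (Q_unique hj hj₀))
      · intro hj₀N; exact absurd (Finset.mem_range.mpr (by omega)) hj₀N
    · rw [g_eq_zero h]
      have : ∀ N, ∑ j ∈ Finset.range N,
          (if Q t j s then s (2 * j + 1) else 0) = 0 := by
        intro N
        apply Finset.sum_eq_zero
        intro j _
        exact if_neg (fun hj => h ⟨j, hj⟩)
      simp only [this]
      exact tendsto_const_nhds
  exact measurable_of_tendsto_metrizable
    (fun N => Finset.measurable_sum _ fun j _ => by
      have : (fun s : ℕ → ℝ => if Q t j s then s (2 * j + 1) else 0)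
          = Set.indicator {s : ℕ → ℝ | Q t j s} (fun s' => s' (2 * j + 1)) := by
        ext s'; rw [Set.indicator_apply]; rfl
      rw [this]
      exact (measurable_pi_apply (2 * j + 1)).indicator (measurableSet_Q t j))
    (tendsto_pi_nhds.mpr key)

lemma continuousAt_g {t : ℝ} (ht : 0 < t) {s : ℕ → ℝ} (h0 : s 0 = 0)
    (ha : ∀ m, 1 ≤ m → P s m ≠ t) (hb : ∃ M, t < P s M) :
    ContinuousAt (g t) s := by
  classical
  have hP0 : P s 0 = 0 := by simp [P]
  have hP1 : P s 1 = 0 := by simp [P, h0]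
  set M := Nat.find hb with hM
  have hMspec : t < P s M := Nat.find_spec hb
  have hM2 : 2 ≤ M := by
    by_contra hlt
    interval_cases M
    · rw [hP0] at hMspec; exact absurd (ht.trans hMspec) (lt_irrefl 0)
    · rw [hP1] at hMspec; exact absurd (ht.trans hMspec) (lt_irrefl 0)
  set j := M - 2 with hj
  have hj2 : j + 2 = M := by omega
  have hlow : P s (j + 1) < t := by
    have hle : ¬ t < P s (j + 1) := Nat.find_min hb (by omega)
    exact lt_of_le_of_ne (not_lt.mp hle) (ha (j + 1) (by omega))
  have hhigh : t < P s (j + 2) := by rw [hj2]; exact hMspec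
  set W : Set (ℕ → ℝ) := {s' | P s' (j + 1) < t ∧ t < P s' (j + 2)} with hW
  have hWopen : IsOpen W := by
    have h1 : IsOpen {s' : ℕ → ℝ | P s' (j + 1) < t} :=
      isOpen_lt (continuous_P (j + 1)) continuous_const
    have h2 : IsOpen {s' : ℕ → ℝ | t < P s' (j + 2)} :=
      isOpen_lt continuous_const (continuous_P (j + 2))
    exact h1.inter h2
  have hsW : s ∈ W := ⟨hlow, hhigh⟩
  have hev : g t =ᶠ[𝓝 s] fun s' => s' (2 * j + 1) := by
    filter_upwards [hWopen.mem_nhds hsW] with s' hs'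
    exact g_eq ⟨hs'.1.le, hs'.2⟩
  exact ((continuous_apply (2 * j + 1)).continuousAt).congr hev.symm

lemma P_interleave (u v : ℕ → ℝ) (hu : ∀ j, 0 ≤ u j) (m : ℕ) :
    P (fun k => if Even k then u (k / 2) else v (k / 2)) m = ∑ i ∈ Finset.range m, u i := by
  unfold P
  apply Finset.sum_congr rfl
  intro i _
  have h1 : (fun k => if Even k then u (k / 2) else v (k / 2)) (2 * i) = u i := by
    simp only
    rw [if_pos (even_two_mul i), Nat.mul_div_cancel_left i (by norm_num)]
  rw [h1]
  exact max_eq_left (hu i)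

lemma jump_eq_g (u v : ℕ → ℝ) (t : ℝ) (hu : ∀ j, 0 ≤ u j) :
    jumpProcess u v t = g t (fun k => if Even k then u (k / 2) else v (k / 2)) := by
  classical
  set s : ℕ → ℝ := fun k => if Even k then u (k / 2) else v (k / 2) with hs
  have hso : ∀ i, s (2 * i + 1) = v i := by
    intro i
    simp only [hs]
    rw [if_neg (by simp [Nat.even_add_one, Nat.even_mul]), Nat.mul_add_div (by norm_num)]
    norm_num
  have hPs : ∀ m, P s m = ∑ i ∈ Finset.range m, u i := fun m => P_interleave u v hu m
  by_cases h0 : t < u 0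
  · rw [jumpProcess, if_pos h0]
    rw [g_eq_zero]
    rintro ⟨j, hj⟩
    have : P s (j + 1) ≤ t := hj.1
    rw [hPs] at this
    have hu0 : u 0 ≤ ∑ i ∈ Finset.range (j + 1), u i := by
      apply Finset.single_le_sum (fun i _ => hu i)
      simp
    exact absurd (h0.trans_le hu0) (not_lt.mpr this)
  · rw [jumpProcess, if_neg h0]
    by_cases hex : ∃ j, Q t j s
    · obtain ⟨j, hj⟩ := hex
      rw [g_eq hj, hso j]
      rw [tsum_eq_single j]
      · have hmem : t ∈ Set.Ico (∑ i ∈ Finset.range (j + 1), u i)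
            (∑ i ∈ Finset.range (j + 2), u i) := by
          constructor
          · rw [← hPs]; exact hj.1
          · rw [← hPs]; exact hj.2
        rw [Set.indicator_of_mem hmem, mul_one]
      · intro j' hne
        have hnot : t ∉ Set.Ico (∑ i ∈ Finset.range (j' + 1), u i)
            (∑ i ∈ Finset.range (j' + 2), u i) := by
          intro hmem
          rw [← hPs, ← hPs] at hmem
          exact hne (Q_unique ⟨hmem.1, hmem.2⟩ hj)
        rw [Set.indicator_of_notMem hnot, mul_zero]
    · rw [g_eq_zero hex]
      have hz : ∀ j : ℕ, v j * Set.indicator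
          (Set.Ico (∑ i ∈ Finset.range (j + 1), u i) (∑ i ∈ Finset.range (j + 2), u i))
          (fun _ => (1 : ℝ)) t = 0 := by
        intro j
        have hnot : t ∉ Set.Ico (∑ i ∈ Finset.range (j + 1), u i)
            (∑ i ∈ Finset.range (j + 2), u i) := by
          intro hmem
          rw [← hPs, ← hPs] at hmem
          exact hex ⟨j, hmem.1, hmem.2⟩
        rw [Set.indicator_of_notMem hnot, mul_zero]
      simp only [hz]
      exact tsum_zero

/-- Portmanteau: null-frontier sets have converging measures, for weakly converging
probability measures. -/
lemma tendsto_measure_nullFrontier {X : Type*} [MeasurableSpace X] [TopologicalSpace X]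
    [OpensMeasurableSpace X] [HasOuterApproxClosed X]
    {μs : ℕ → ProbabilityMeasure X} {ν : ProbabilityMeasure X}
    (hcv : Tendsto μs atTop (𝓝 ν)) {E : Set X}
    (hE : (ν : Measure X) (frontier E) = 0) :
    Tendsto (fun n => (μs n : Measure X) E) atTop (𝓝 ((ν : Measure X) E)) := by
  have h_opens : ∀ G, IsOpen G → (ν : Measure X) G ≤ atTop.liminf fun n => (μs n : Measure X) G :=
    fun G hG => le_measure_liminf_of_limsup_measure_compl_le hG.measurableSet
      (ProbabilityMeasure.limsup_measure_closed_le_of_tendsto hcv hG.isClosed_compl)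
  exact tendsto_measure_of_null_frontier h_opens hE

/-- A.e.-continuous bounded mapping theorem for nonnegative functions. -/
lemma tendsto_integral_of_aecont₀ {X : Type*} [MeasurableSpace X] [TopologicalSpace X]
    [OpensMeasurableSpace X] [HasOuterApproxClosed X]
    {μs : ℕ → ProbabilityMeasure X} {ν : ProbabilityMeasure X}
    (hcv : Tendsto μs atTop (𝓝 ν))
    {h : X → ℝ} (hm : Measurable h) {M : ℝ} (h0 : ∀ x, 0 ≤ h x) (hbd : ∀ x, h x ≤ M)
    {B : Set X} (hBnull : (ν : Measure X) B = 0)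
    (hcont : ∀ x ∉ B, ContinuousAt h x) :
    Tendsto (fun n => ∫ x, h x ∂(μs n : Measure X)) atTop (𝓝 (∫ x, h x ∂(ν : Measure X))) := by
  have hintble : ∀ ρ : Measure X, IsProbabilityMeasure ρ → Integrable h ρ := by
    intro ρ hρ
    refine Integrable.mono' (integrable_const M) hm.aestronglyMeasurable ?_
    refine ae_of_all _ fun x => ?_
    rw [Real.norm_eq_abs, abs_of_nonneg (h0 x)]
    exact hbd x
  have hT : Set.Countable {a : ℝ | 0 < (ν : Measure X) {x | h x = a}} :=
    Measure.countable_meas_level_set_pos hm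
  have key : ∀ a : ℝ, a ∉ {a : ℝ | 0 < (ν : Measure X) {x | h x = a}} →
      Tendsto (fun n => ((μs n : Measure X) {x | a < h x}).toReal) atTop
        (𝓝 (((ν : Measure X) {x | a < h x}).toReal)) := by
    intro a haT
    have hlevel : (ν : Measure X) {x | h x = a} = 0 := by
      by_contra hne
      exact haT (pos_iff_ne_zero.mpr hne)
    have hfr : frontier {x | a < h x} ⊆ B ∪ {x | h x = a} := by
      intro x hx
      by_cases hxB : x ∈ B
      · exact Or.inl hxB
      · refine Or.inr ?_
        have hc := hcont x hxB
        rw [frontier_eq_closure_inter_closure] at hx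
        have h1 : a ≤ h x := by
          by_contra hlt
          push_neg at hlt
          have hnb : h ⁻¹' (Set.Iio a) ∈ 𝓝 x := hc.preimage_mem_nhds (Iio_mem_nhds hlt)
          obtain ⟨y, hy1, hy2⟩ := (mem_closure_iff_nhds.mp hx.1) _ hnb
          have h3 : a < h y := hy2
          have h4 : h y < a := hy1
          linarith
        have h2 : h x ≤ a := by
          by_contra hlt
          push_neg at hlt
          have hnb : h ⁻¹' (Set.Ioi a) ∈ 𝓝 x := hc.preimage_mem_nhds (Ioi_mem_nhds hlt)
          obtain ⟨y, hy1, hy2⟩ := (mem_closure_iff_nhds.mp hx.2) _ hnb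
          have h4 : a < h y := hy1
          exact hy2 h4
        exact le_antisymm h2 h1
    have hfr0 : (ν : Measure X) (frontier {x | a < h x}) = 0 :=
      measure_mono_null hfr (measure_union_null hBnull hlevel)
    have := tendsto_measure_nullFrontier hcv hfr0
    exact (ENNReal.tendsto_toReal (measure_ne_top _ _)).comp this
  have hlayer : ∀ ρ : Measure X, IsProbabilityMeasure ρ →
      ∫ x, h x ∂ρ = ∫ a in Set.Ioi (0:ℝ), (ρ {x | a < h x}).toReal := by
    intro ρ hρ
    exact (hintble ρ hρ).integral_eq_integral_meas_lt (ae_of_all _ h0)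
  have hrw : ∀ n, ∫ x, h x ∂(μs n : Measure X)
      = ∫ a in Set.Ioi (0:ℝ), ((μs n : Measure X) {x | a < h x}).toReal :=
    fun n => hlayer _ inferInstance
  rw [hlayer (ν : Measure X) inferInstance]
  simp only [hrw]
  have hmeasF : ∀ ρ : Measure X,
      Measurable (fun a : ℝ => (ρ {x | a < h x}).toReal) := by
    intro ρ
    apply Measurable.ennreal_toReal
    exact Antitone.measurable (fun p q hpq => measure_mono (fun x hx => lt_of_le_of_lt hpq hx))
  apply tendsto_integral_of_dominated_convergence
      (bound := Set.indicator (Set.Ioc (0:ℝ) M) (fun _ => (1:ℝ)))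
  · exact fun n => (hmeasF _).aestronglyMeasurable
  · rw [integrable_indicator_iff measurableSet_Ioc]
    apply (integrableOn_const_iff (by simp)).mpr
    right
    calc (volume.restrict (Set.Ioi (0:ℝ))) (Set.Ioc 0 M) ≤ volume (Set.Ioc 0 M) :=
          Measure.restrict_apply_le _ _
      _ < ⊤ := measure_Ioc_lt_top
  · intro n
    filter_upwards [ae_restrict_mem measurableSet_Ioi] with a ha
    rw [Real.norm_eq_abs, abs_of_nonneg ENNReal.toReal_nonneg]
    by_cases haM : a ≤ M
    · have : a ∈ Set.Ioc (0:ℝ) M := ⟨ha, haM⟩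
      rw [Set.indicator_of_mem this]
      calc ((μs n : Measure X) {x | a < h x}).toReal
          ≤ ((μs n : Measure X) Set.univ).toReal := by
            apply ENNReal.toReal_mono (measure_ne_top _ _) (measure_mono (subset_univ _))
        _ = 1 := by simp
    · have hempty : {x | a < h x} = ∅ := by
        ext x
        simp only [Set.mem_setOf_eq, Set.mem_empty_iff_false, iff_false, not_lt]
        exact (hbd x).trans (le_of_not_ge haM)
      rw [hempty]
      simp only [measure_empty, ENNReal.toReal_zero]
      exact Set.indicator_nonneg (fun _ _ => zero_le_one) _
  · have hTnull : (volume.restrict (Set.Ioi (0:ℝ)))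
        {a : ℝ | 0 < (ν : Measure X) {x | h x = a}} = 0 :=
      le_antisymm ((Measure.restrict_apply_le _ _).trans (hT.measure_zero volume).le) (zero_le)
    have hae : ∀ᵐ a ∂(volume.restrict (Set.Ioi (0:ℝ))),
        a ∉ {a : ℝ | 0 < (ν : Measure X) {x | h x = a}} := by
      rw [ae_iff]
      simpa [not_not, pos_iff_ne_zero] using hTnull
    filter_upwards [hae] with a ha
    exact key a ha

/-- A.e.-continuous bounded mapping theorem. -/
lemma tendsto_integral_of_aecont {X : Type*} [MeasurableSpace X] [TopologicalSpace X]
    [OpensMeasurableSpace X] [HasOuterApproxClosed X]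
    {μs : ℕ → ProbabilityMeasure X} {ν : ProbabilityMeasure X}
    (hcv : Tendsto μs atTop (𝓝 ν))
    {h : X → ℝ} (hm : Measurable h) {M : ℝ} (hbd : ∀ x, |h x| ≤ M)
    {B : Set X} (hBnull : (ν : Measure X) B = 0)
    (hcont : ∀ x ∉ B, ContinuousAt h x) :
    Tendsto (fun n => ∫ x, h x ∂(μs n : Measure X)) atTop (𝓝 (∫ x, h x ∂(ν : Measure X))) := by
  have hint : ∀ ρ : Measure X, IsProbabilityMeasure ρ → Integrable h ρ := by
    intro ρ hρ
    refine Integrable.mono' (integrable_const M) hm.aestronglyMeasurable ?_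
    exact ae_of_all _ fun x => by rw [Real.norm_eq_abs]; exact hbd x
  have key := tendsto_integral_of_aecont₀ (h := fun x => h x + M) (M := 2 * M) hcv
    (hm.add measurable_const)
    (fun x => by have h1 := hbd x; have h2 := neg_abs_le (h x); show 0 ≤ h x + M; linarith)
    (fun x => by have h1 := hbd x; have h2 := le_abs_self (h x); show h x + M ≤ 2 * M; linarith)
    hBnull (fun x hx => (hcont x hx).add continuousAt_const)
  have hrw : ∀ ρ : Measure X, IsProbabilityMeasure ρ →
      ∫ x, (h x + M) ∂ρ = (∫ x, h x ∂ρ) + M := by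
    intro ρ hρ
    rw [integral_add (hint ρ hρ) (integrable_const M), integral_const]
    simp
  rw [hrw (ν : Measure X) inferInstance] at key
  have key' : Tendsto (fun n => (∫ x, h x ∂(μs n : Measure X)) + M) atTop
      (𝓝 ((∫ x, h x ∂(ν : Measure X)) + M)) :=
    key.congr (fun n => hrw _ inferInstance)
  have := key'.sub_const M
  simpa using this

end Stmt8Aux

namespace Stmt8Aux

lemma key {Ω : Type*} [MeasureSpace Ω] [IsProbabilityMeasure (volume : Measure Ω)]
    (Xs : ℕ → Ω → (ℕ → ℝ)) (X0 : Ω → (ℕ → ℝ))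
    (hXmeas : ∀ n, Measurable (Xs n)) (hX0meas : Measurable X0)
    (hcv : ∀ f : BoundedContinuousFunction (ℕ → ℝ) ℝ,
      Tendsto (fun n => ∫ ω, f (Xs n ω)) atTop (𝓝 (∫ ω, f (X0 ω))))
    (k : ℕ) (t : Fin k → ℝ)
    (B : Set (ℕ → ℝ))
    (hBnull : Measure.map X0 volume B = 0)
    (hcont : ∀ (i : Fin k), ∀ s ∉ B, ContinuousAt (Stmt8Aux.g (t i)) s)
    (φ : BoundedContinuousFunction (Fin k → ℝ) ℝ) :
    Tendsto (fun n => ∫ ω, φ (fun i => Stmt8Aux.g (t i) (Xs n ω)))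
      atTop (𝓝 (∫ ω, φ (fun i => Stmt8Aux.g (t i) (X0 ω)))) := by
  haveI hiP : ∀ n, IsProbabilityMeasure (Measure.map (Xs n) volume) :=
    fun n => Measure.isProbabilityMeasure_map (hXmeas n).aemeasurable
  haveI hiP0 : IsProbabilityMeasure (Measure.map X0 volume) :=
    Measure.isProbabilityMeasure_map hX0meas.aemeasurable
  set μs : ℕ → ProbabilityMeasure (ℕ → ℝ) :=
    fun n => ⟨Measure.map (Xs n) volume, hiP n⟩ with hμs
  set ν : ProbabilityMeasure (ℕ → ℝ) := ⟨Measure.map X0 volume, hiP0⟩ with hν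
  have hcoe : ∀ n, (μs n : Measure (ℕ → ℝ)) = Measure.map (Xs n) volume := fun n => rfl
  have hcoe0 : (ν : Measure (ℕ → ℝ)) = Measure.map X0 volume := rfl
  have hGmeas : Measurable (fun s : ℕ → ℝ => (fun i => Stmt8Aux.g (t i) s : Fin k → ℝ)) :=
    measurable_pi_lambda _ fun i => Stmt8Aux.measurable_g (t i)
  have hhm : Measurable (fun s : ℕ → ℝ => φ (fun i => Stmt8Aux.g (t i) s)) :=
    φ.continuous.measurable.comp hGmeas
  have hbd : ∀ s : ℕ → ℝ, |φ (fun i => Stmt8Aux.g (t i) s)| ≤ ‖φ‖ := fun s => by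
    rw [← Real.norm_eq_abs]; exact φ.norm_coe_le_norm _
  have hwk : Tendsto μs atTop (𝓝 ν) := by
    rw [ProbabilityMeasure.tendsto_iff_forall_integral_tendsto]
    intro f
    have hrwn : ∀ n, ∫ s, f s ∂(μs n : Measure (ℕ → ℝ)) = ∫ ω, f (Xs n ω) := fun n => by
      rw [hcoe]
      exact integral_map (hXmeas n).aemeasurable f.continuous.measurable.aestronglyMeasurable
    have hrw0 : ∫ s, f s ∂(ν : Measure (ℕ → ℝ)) = ∫ ω, f (X0 ω) := by
      rw [hcoe0]
      exact integral_map hX0meas.aemeasurable f.continuous.measurable.aestronglyMeasurable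
    rw [hrw0]
    exact (hcv f).congr (fun n => (hrwn n).symm)
  have hcontφ : ∀ s ∉ B, ContinuousAt (fun s => φ (fun i => Stmt8Aux.g (t i) s)) s := by
    intro s hs
    exact (φ.continuous.continuousAt).comp (continuousAt_pi.mpr fun i => hcont i s hs)
  have hBnullν : (ν : Measure (ℕ → ℝ)) B = 0 := by rw [hcoe0]; exact hBnull
  have main := Stmt8Aux.tendsto_integral_of_aecont hwk hhm hbd hBnullν hcontφ
  have hn : ∀ n, ∫ s, φ (fun i => Stmt8Aux.g (t i) s) ∂(μs n : Measure (ℕ → ℝ))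
      = ∫ ω, φ (fun i => Stmt8Aux.g (t i) (Xs n ω)) := fun n => by
    rw [hcoe]
    exact integral_map (hXmeas n).aemeasurable hhm.aestronglyMeasurable
  have h0 : ∫ s, φ (fun i => Stmt8Aux.g (t i) s) ∂(ν : Measure (ℕ → ℝ))
      = ∫ ω, φ (fun i => Stmt8Aux.g (t i) (X0 ω)) := by
    rw [hcoe0]
    exact integral_map hX0meas.aemeasurable hhm.aestronglyMeasurable
  rw [h0] at main
  exact main.congr (fun n => hn n)

end Stmt8Aux

/-- Convergence of finite-dimensional distributions of jump processes: if the interleaved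
jump times and locations converge in distribution (in the product topology), the limit jump
times are atomless and divergent, and `U₀ ≡ 0` for the limit, then
`(Y^n_{t₁},…,Y^n_{t_k}) ⇒ (Y_{t₁},…,Y_{t_k})` for all `0 < t₁ < ⋯ < t_k`. -/
theorem stmt8 {Ω : Type*} [MeasureSpace Ω] [IsProbabilityMeasure (volume : Measure Ω)]
    (Un Vn : ℕ → ℕ → Ω → ℝ) (U V : ℕ → Ω → ℝ)
    (hmeasUn : ∀ n j, Measurable (Un n j)) (hmeasVn : ∀ n j, Measurable (Vn n j))
    (hmeasU : ∀ j, Measurable (U j)) (hmeasV : ∀ j, Measurable (V j))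
    (hUnnonneg : ∀ n j ω, 0 ≤ Un n j ω)
    (hUnpos : ∀ n j, 1 ≤ j → ∀ᵐ ω, 0 < Un n j ω)
    (hUnonneg : ∀ j ω, 0 ≤ U j ω)
    (hU0 : ∀ ω, U 0 ω = 0)
    (hUpos : ∀ j, 1 ≤ j → ∀ᵐ ω, 0 < U j ω)
    (hconv : ∀ φ : BoundedContinuousFunction (ℕ → ℝ) ℝ,
      Tendsto (fun n => ∫ ω, φ (fun k => if Even k then Un n (k / 2) ω else Vn n (k / 2) ω))
        atTop (𝓝 (∫ ω, φ (fun k => if Even k then U (k / 2) ω else V (k / 2) ω))))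
    (hnoatom : ∀ x > (0 : ℝ), ∀ n, 1 ≤ n →
      volume {ω | ∑ i ∈ Finset.Icc 1 n, U i ω = x} = 0)
    (hdiverge : ∀ x > (0 : ℝ),
      Tendsto (fun n => (volume {ω | x < ∑ i ∈ Finset.Icc 1 n, U i ω}).toReal)
        atTop (𝓝 1)) :
    ∀ (k : ℕ) (t : Fin k → ℝ), (∀ i, 0 < t i) → StrictMono t →
      ∀ φ : BoundedContinuousFunction (Fin k → ℝ) ℝ,
        Tendsto (fun n => ∫ ω, φ (fun i =>
            jumpProcess (fun j => Un n j ω) (fun j => Vn n j ω) (t i)))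
          atTop (𝓝 (∫ ω, φ (fun i =>
            jumpProcess (fun j => U j ω) (fun j => V j ω) (t i)))) := by
  classical
  intro k t htpos _htmono φ
  -- the interleaved random sequences
  set Xs : ℕ → Ω → (ℕ → ℝ) :=
    fun n ω k' => if Even k' then Un n (k' / 2) ω else Vn n (k' / 2) ω with hXs
  set X0 : Ω → (ℕ → ℝ) :=
    fun ω k' => if Even k' then U (k' / 2) ω else V (k' / 2) ω with hX0
  have hXmeas : ∀ n, Measurable (Xs n) := by
    intro n
    apply measurable_pi_lambda
    intro j
    by_cases hj : Even j
    · simpa only [hXs, if_pos hj] using hmeasUn n (j / 2)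
    · simpa only [hXs, if_neg hj] using hmeasVn n (j / 2)
  have hX0meas : Measurable X0 := by
    apply measurable_pi_lambda
    intro j
    by_cases hj : Even j
    · simpa only [hX0, if_pos hj] using hmeasU (j / 2)
    · simpa only [hX0, if_neg hj] using hmeasV (j / 2)
  -- identification of the jump process values with `g`
  have hid_n : ∀ n ω (i : Fin k), jumpProcess (fun j => Un n j ω) (fun j => Vn n j ω) (t i)
      = Stmt8Aux.g (t i) (Xs n ω) :=
    fun n ω i => Stmt8Aux.jump_eq_g _ _ _ (fun j => hUnnonneg n j ω)
  have hid_0 : ∀ ω (i : Fin k), jumpProcess (fun j => U j ω) (fun j => V j ω) (t i)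
      = Stmt8Aux.g (t i) (X0 ω) :=
    fun ω i => Stmt8Aux.jump_eq_g _ _ _ (fun j => hUnonneg j ω)
  -- partial sums of the interleaved sequence
  have hPx : ∀ (ω : Ω) (m : ℕ), Stmt8Aux.P (X0 ω) m = ∑ i' ∈ Finset.range m, U i' ω := by
    intro ω m
    rw [hX0]
    exact Stmt8Aux.P_interleave (fun j => U j ω) (fun j => V j ω) (fun j => hUnonneg j ω) m
  have hshift : ∀ (ω : Ω) (m : ℕ), 1 ≤ m →
      ∑ i' ∈ Finset.range m, U i' ω = ∑ i' ∈ Finset.Icc 1 (m - 1), U i' ω := by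
    intro ω m hm
    have hins : Finset.range m = insert 0 (Finset.Icc 1 (m - 1)) := by
      ext x
      simp only [Finset.mem_range, Finset.mem_insert, Finset.mem_Icc]
      omega
    rw [hins, Finset.sum_insert (by simp), hU0, zero_add]
  -- the bad set
  set B : Set (ℕ → ℝ) :=
    {s | s 0 ≠ 0} ∪ ((⋃ (i : Fin k), ⋃ (m : ℕ), ⋃ (_ : 2 ≤ m), {s | Stmt8Aux.P s m = t i})
      ∪ (⋃ i : Fin k, {s | ∀ M, Stmt8Aux.P s M ≤ t i})) with hB
  have hBnull : Measure.map X0 volume B = 0 := by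
    apply measure_union_null
    · -- `s 0 ≠ 0` is impossible
      have hmeas1 : MeasurableSet {s : ℕ → ℝ | s 0 ≠ 0} := by
        have := (measurable_pi_apply (X := fun _ : ℕ => ℝ) 0)
          (measurableSet_singleton (0:ℝ)).compl
        convert this using 1
        ext s; simp
      rw [Measure.map_apply hX0meas hmeas1]
      have : X0 ⁻¹' {s : ℕ → ℝ | s 0 ≠ 0} = ∅ := by
        ext ω
        simp only [Set.mem_preimage, Set.mem_setOf_eq, Set.mem_empty_iff_false, iff_false,
          not_not, hX0]
        rw [if_pos (Even.zero), Nat.zero_div, hU0]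
      rw [this, measure_empty]
    apply measure_union_null
    · -- atoms of partial sums
      refine measure_iUnion_null fun i => measure_iUnion_null fun m => measure_iUnion_null
        fun hm => ?_
      have hmeas2 : MeasurableSet {s : ℕ → ℝ | Stmt8Aux.P s m = t i} :=
        (Stmt8Aux.measurable_P m) (measurableSet_singleton (t i))
      rw [Measure.map_apply hX0meas hmeas2]
      have hseteq : X0 ⁻¹' {s : ℕ → ℝ | Stmt8Aux.P s m = t i}
          = {ω | ∑ i' ∈ Finset.Icc 1 (m - 1), U i' ω = t i} := by
        ext ω
        simp only [Set.mem_preimage, Set.mem_setOf_eq]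
        rw [hPx ω m, hshift ω m (by omega)]
      rw [hseteq]
      exact hnoatom (t i) (htpos i) (m - 1) (by omega)
    · -- divergence of partial sums
      refine measure_iUnion_null fun i => ?_
      have hmeas3 : MeasurableSet {s : ℕ → ℝ | ∀ M, Stmt8Aux.P s M ≤ t i} := by
        have : {s : ℕ → ℝ | ∀ M, Stmt8Aux.P s M ≤ t i}
            = ⋂ M, {s : ℕ → ℝ | Stmt8Aux.P s M ≤ t i} := by
          ext s; simp
        rw [this]
        exact MeasurableSet.iInter fun M => (Stmt8Aux.measurable_P M) measurableSet_Iic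
      rw [Measure.map_apply hX0meas hmeas3]
      set A : ℕ → Set Ω := fun M => {ω | t i < ∑ i' ∈ Finset.Icc 1 M, U i' ω} with hA
      have hAmeas : ∀ M, MeasurableSet (A M) := fun M =>
        (Finset.measurable_sum _ fun j _ => hmeasU j) measurableSet_Ioi
      have hAmono : Monotone A := by
        intro M M' hMM' ω hω
        have hsub : Finset.Icc 1 M ⊆ Finset.Icc 1 M' := Finset.Icc_subset_Icc le_rfl hMM'
        have : ∑ i' ∈ Finset.Icc 1 M, U i' ω ≤ ∑ i' ∈ Finset.Icc 1 M', U i' ω :=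
          Finset.sum_le_sum_of_subset_of_nonneg hsub (fun j _ _ => hUnonneg j ω)
        exact lt_of_lt_of_le hω this
      have htend : Tendsto (fun M => volume (A M)) atTop (𝓝 (volume (⋃ M, A M))) :=
        tendsto_measure_iUnion_atTop hAmono
      have h1 : Tendsto (fun M => (volume (A M)).toReal) atTop
          (𝓝 ((volume (⋃ M, A M)).toReal)) :=
        (ENNReal.tendsto_toReal (measure_ne_top _ _)).comp htend
      have huniq : (volume (⋃ M, A M)).toReal = 1 :=
        tendsto_nhds_unique h1 (hdiverge (t i) (htpos i))
      have hU1 : volume (⋃ M, A M) = 1 := (ENNReal.toReal_eq_one_iff _).mp huniq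
      have hcompl : volume (⋃ M, A M)ᶜ = 0 :=
        (prob_compl_eq_zero_iff (MeasurableSet.iUnion hAmeas)).mpr hU1
      apply measure_mono_null _ hcompl
      intro ω hω
      simp only [Set.mem_compl_iff, Set.mem_iUnion, not_exists]
      intro M hM
      have hM' : t i < ∑ i' ∈ Finset.Icc 1 M, U i' ω := hM
      have h2 : Stmt8Aux.P (X0 ω) (M + 1) ≤ t i := hω (M + 1)
      rw [hPx ω (M + 1), hshift ω (M + 1) (by omega)] at h2
      simp only [Nat.add_sub_cancel] at h2
      linarith
  -- continuity of `g (t i)` off `B`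
  have hcont : ∀ (i : Fin k), ∀ s ∉ B, ContinuousAt (Stmt8Aux.g (t i)) s := by
    intro i s hs
    simp only [hB, Set.mem_union, Set.mem_iUnion, Set.mem_setOf_eq, not_or, not_exists,
      not_not, not_forall, not_le] at hs
    obtain ⟨hs0, hs23⟩ := hs
    obtain ⟨hs2, hs3⟩ := hs23
    refine Stmt8Aux.continuousAt_g (htpos i) hs0 ?_ ?_
    · intro m hm
      rcases Nat.lt_or_ge m 2 with hm2 | hm2
      · have hm1 : m = 1 := by omega
        rw [hm1]
        have : Stmt8Aux.P s 1 = 0 := by simp [Stmt8Aux.P, hs0]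
        rw [this]
        exact (htpos i).ne
      · exact hs2 i m hm2
    · obtain ⟨M, hM⟩ := hs3 i
      exact ⟨M, hM⟩
  -- conclude via the key lemma
  have hmain := Stmt8Aux.key Xs X0 hXmeas hX0meas
    (fun f => by simpa only [hXs, hX0] using hconv f) k t B hBnull hcont φ
  have hrw_n : (fun n => ∫ ω, φ (fun i =>
      jumpProcess (fun j => Un n j ω) (fun j => Vn n j ω) (t i)))
      = fun n => ∫ ω, φ (fun i => Stmt8Aux.g (t i) (Xs n ω)) := by
    funext n
    congr 1
    funext ω
    congr 1
    funext i
    exact hid_n n ω i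
  have hrw_0 : ∫ ω, φ (fun i => jumpProcess (fun j => U j ω) (fun j => V j ω) (t i))
      = ∫ ω, φ (fun i => Stmt8Aux.g (t i) (X0 ω)) := by
    congr 1
    funext ω
    congr 1
    funext i
    exact hid_0 ω i
  rw [hrw_n, hrw_0]
  exact hmain
end

section
/- Let f : ℝ → ℝ be C² with local minimum at 0, f''(0) > 0, and suppose |f'(x)| ≥ c₀|x| for |x| ≤ ε₀. Let y^η_n be gradient descent y^η_{n+1} = y^η_n - η f'(y^η_n) started at x with |x| ≤ 2ε where 3ε < ε₀. Then for all sufficiently small η > 0: |y^η_n| ≤ 2ε for all n ≥ 0, the sequence |y^η_n| is non-increasing, and |y^η_{⌈(1/η)^β⌉}| ≤ ε for any fixed β > 1. -/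
open Filter Set
open Topology

/-- Gradient descent contraction near a nondegenerate local minimum at `0`: started in the
`2ε`-neighborhood, for all sufficiently small `η` the iterates remain in the
`2ε`-neighborhood, `|y_n|` is non-increasing, and after `⌈(1/η)^β⌉` steps the iterate is in
the `ε`-neighborhood. -/
theorem stmt17 (f : ℝ → ℝ) (hf : ContDiff ℝ 2 f)
    (hcrit : deriv f 0 = 0) (hlocmin : IsLocalMin f 0)
    (hf'' : 0 < deriv (deriv f) 0)
    (c₀ ε₀ : ℝ) (hc₀ : 0 < c₀) (hε₀ : 0 < ε₀)
    (hgrad : ∀ x : ℝ, |x| ≤ ε₀ → c₀ * |x| ≤ |deriv f x|)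
    (ε : ℝ) (hε : 0 < ε) (hεε₀ : 3 * ε < ε₀)
    (β : ℝ) (hβ : 1 < β) :
    ∃ η₀ > (0 : ℝ), ∀ η ∈ Ioo (0 : ℝ) η₀, ∀ x : ℝ, |x| ≤ 2 * ε →
      ∀ y : ℕ → ℝ, y 0 = x → (∀ n : ℕ, y (n + 1) = y n - η * deriv f (y n)) →
        (∀ n : ℕ, |y n| ≤ 2 * ε) ∧ (∀ n : ℕ, |y (n + 1)| ≤ |y n|) ∧
          |y ⌈(1 / η) ^ β⌉₊| ≤ ε := by
  -- regularity facts
  have hf1 : ContDiff ℝ 1 (deriv f) := by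
    rw [show (2 : WithTop ℕ∞) = 1 + 1 from rfl] at hf
    exact (contDiff_succ_iff_deriv.mp hf).2.2
  have hd1 : Differentiable ℝ (deriv f) := hf1.differentiable one_ne_zero
  have hc2 : Continuous (deriv (deriv f)) := hf1.continuous_deriv le_rfl
  have hcf' : Continuous (deriv f) := hd1.continuous
  have hfc : Continuous f := hf.continuous
  -- bound on f'' on [-ε₀, ε₀]
  obtain ⟨M0, hM0⟩ := isCompact_Icc.exists_bound_of_continuousOn
    (s := Icc (-ε₀) ε₀) hc2.continuousOn
  obtain ⟨M, hM0', hMc⟩ : ∃ M : ℝ, (∀ x ∈ Icc (-ε₀) ε₀, ‖deriv (deriv f) x‖ ≤ M) ∧ c₀ ≤ M :=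
    ⟨max M0 c₀, fun x hx => le_trans (hM0 x hx) (le_max_left _ _), le_max_right _ _⟩
  have hMpos : 0 < M := lt_of_lt_of_le hc₀ hMc
  -- |f'(x)| ≤ M |x| on [-ε₀, ε₀]
  have hlip : ∀ x : ℝ, |x| ≤ ε₀ → |deriv f x| ≤ M * |x| := by
    intro x hx
    have hx' : x ∈ Icc (-ε₀) ε₀ := by
      rcases abs_le.mp hx with ⟨h1, h2⟩; exact ⟨h1, h2⟩
    have h0 : (0:ℝ) ∈ Icc (-ε₀) ε₀ := ⟨by linarith, le_of_lt hε₀⟩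
    have := Convex.norm_image_sub_le_of_norm_deriv_le (f := deriv f) (C := M)
      (fun z _ => hd1 z)
      (fun z hz => hM0' z hz)
      (convex_Icc (-ε₀) ε₀) h0 hx'
    simpa [hcrit, Real.norm_eq_abs] using this
  -- f' is nonzero away from 0 in [-ε₀, ε₀]
  have hne : ∀ x : ℝ, |x| ≤ ε₀ → x ≠ 0 → deriv f x ≠ 0 := by
    intro x hx hx0 h
    have h1 := hgrad x hx
    rw [h] at h1
    have h2 : 0 < |x| := abs_pos.mpr hx0
    simp only [abs_zero] at h1
    nlinarith
  -- local min gives a neighborhood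
  obtain ⟨δ, hδpos, hδ⟩ := Metric.eventually_nhds_iff.mp hlocmin
  -- sign at the right endpoint
  have hsignR : 0 < deriv f ε₀ := by
    have hεne : deriv f ε₀ ≠ 0 :=
      hne ε₀ (by rw [abs_of_pos hε₀]) (ne_of_gt hε₀)
    rcases hεne.lt_or_gt with hneg | hpos
    · exfalso
      have hall : ∀ x ∈ Ioc (0:ℝ) ε₀, deriv f x < 0 := by
        rintro x ⟨hx0, hxε⟩
        rcases (hne x (by rw [abs_of_pos hx0]; exact hxε) (ne_of_gt hx0)).lt_or_gt with h | h
        · exact h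
        · exfalso
          have h0mem : (0:ℝ) ∈ Icc (deriv f ε₀) (deriv f x) := ⟨le_of_lt hneg, le_of_lt h⟩
          obtain ⟨c, hc, hc0⟩ := intermediate_value_Icc' hxε hcf'.continuousOn h0mem
          exact hne c (abs_le.mpr ⟨by linarith [hc.1], hc.2⟩)
            (ne_of_gt (lt_of_lt_of_le hx0 hc.1)) hc0
      have hanti : StrictAntiOn f (Icc 0 ε₀) :=
        strictAntiOn_of_deriv_neg (convex_Icc 0 ε₀) hfc.continuousOn
          (fun x hx => by
            rw [interior_Icc] at hx
            exact hall x ⟨hx.1, le_of_lt hx.2⟩)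
      set t := min ε₀ δ / 2 with ht
      have ht0 : 0 < t := by positivity
      have htε : t ≤ ε₀ := by
        have := min_le_left ε₀ δ; rw [ht]; linarith
      have htδ : t < δ := by
        have := min_le_right ε₀ δ; rw [ht]; linarith
      have h1 : f t < f 0 := hanti ⟨le_rfl, le_of_lt hε₀⟩ ⟨le_of_lt ht0, htε⟩ ht0
      have h2 : f 0 ≤ f t := hδ (by rw [Real.dist_eq, sub_zero, abs_of_pos ht0]; exact htδ)
      linarith
    · exact hpos
  -- sign on the right
  have hposR : ∀ x : ℝ, 0 < x → x ≤ ε₀ → 0 < deriv f x := by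
    intro x hx0 hxε
    rcases (hne x (by rw [abs_of_pos hx0]; exact hxε) (ne_of_gt hx0)).lt_or_gt with h | h
    · exfalso
      have h0mem : (0:ℝ) ∈ Icc (deriv f x) (deriv f ε₀) := ⟨le_of_lt h, le_of_lt hsignR⟩
      obtain ⟨c, hc, hc0⟩ := intermediate_value_Icc hxε hcf'.continuousOn h0mem
      exact hne c (abs_le.mpr ⟨by linarith [hc.1], hc.2⟩)
        (ne_of_gt (lt_of_lt_of_le hx0 hc.1)) hc0
    · exact h
  -- sign at the left endpoint
  have hsignL : deriv f (-ε₀) < 0 := by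
    have hεne : deriv f (-ε₀) ≠ 0 :=
      hne (-ε₀) (by rw [abs_of_neg (by linarith)]; linarith) (by linarith)
    rcases hεne.lt_or_gt with hneg | hpos
    · exact hneg
    · exfalso
      have hall : ∀ x ∈ Ico (-ε₀) (0:ℝ), 0 < deriv f x := by
        rintro x ⟨hxε, hx0⟩
        rcases (hne x (by rw [abs_of_neg hx0]; linarith) (ne_of_lt hx0)).lt_or_gt with h | h
        · exfalso
          have h0mem : (0:ℝ) ∈ Icc (deriv f x) (deriv f (-ε₀)) := ⟨le_of_lt h, le_of_lt hpos⟩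
          obtain ⟨c, hc, hc0⟩ := intermediate_value_Icc' hxε hcf'.continuousOn h0mem
          exact hne c (abs_le.mpr ⟨hc.1, by linarith [hc.2]⟩)
            (ne_of_lt (lt_of_le_of_lt hc.2 hx0)) hc0
        · exact h
      have hmono : StrictMonoOn f (Icc (-ε₀) 0) :=
        strictMonoOn_of_deriv_pos (convex_Icc (-ε₀) 0) hfc.continuousOn
          (fun x hx => by
            rw [interior_Icc] at hx
            exact hall x ⟨le_of_lt hx.1, hx.2⟩)
      set t := min ε₀ δ / 2 with ht
      have ht0 : 0 < t := by positivity
      have htε : t ≤ ε₀ := by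
        have := min_le_left ε₀ δ; rw [ht]; linarith
      have htδ : t < δ := by
        have := min_le_right ε₀ δ; rw [ht]; linarith
      have h1 : f (-t) < f 0 := hmono ⟨by linarith, by linarith⟩ ⟨by linarith, le_rfl⟩ (by linarith)
      have h2 : f 0 ≤ f (-t) := hδ (by
        rw [Real.dist_eq, sub_zero, abs_of_neg (by linarith)]; linarith)
      linarith
  -- sign on the left
  have hnegL : ∀ x : ℝ, -ε₀ ≤ x → x < 0 → deriv f x < 0 := by
    intro x hxε hx0
    rcases (hne x (by rw [abs_of_neg hx0]; linarith) (ne_of_lt hx0)).lt_or_gt with h | h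
    · exact h
    · exfalso
      have h0mem : (0:ℝ) ∈ Icc (deriv f (-ε₀)) (deriv f x) := ⟨le_of_lt hsignL, le_of_lt h⟩
      obtain ⟨c, hc, hc0⟩ := intermediate_value_Icc hxε hcf'.continuousOn h0mem
      exact hne c (abs_le.mpr ⟨hc.1, by linarith [hc.2]⟩)
        (ne_of_lt (lt_of_le_of_lt hc.2 hx0)) hc0
  -- key coercivity
  have hkey : ∀ z : ℝ, |z| ≤ ε₀ → c₀ * z ^ 2 ≤ z * deriv f z := by
    intro z hz
    rcases lt_trichotomy z 0 with h | h | h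
    · have hd : deriv f z < 0 := hnegL z (abs_le.mp hz).1 h
      have hg := hgrad z hz
      rw [abs_of_neg h, abs_of_neg hd] at hg
      nlinarith
    · simp [h]
    · have hd : 0 < deriv f z := hposR z h (abs_le.mp hz).2
      have hg := hgrad z hz
      rw [abs_of_pos h, abs_of_pos hd] at hg
      nlinarith
  -- one-step contraction
  have hstep : ∀ η : ℝ, 0 < η → η * M ^ 2 ≤ c₀ → ∀ z : ℝ, |z| ≤ 2 * ε →
      |z - η * deriv f z| ≤ (1 - η * c₀ / 2) * |z| := by
    intro η hη hηM z hz
    have hzε₀ : |z| ≤ ε₀ := by linarith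
    have h1 := hkey z hzε₀
    have h2 := hlip z hzε₀
    have hd2 : (deriv f z) ^ 2 ≤ M ^ 2 * z ^ 2 := by
      nlinarith [sq_abs z, sq_abs (deriv f z), abs_nonneg (deriv f z), abs_nonneg z]
    have hcM2 : c₀ ^ 2 ≤ M ^ 2 := pow_le_pow_left₀ hc₀.le hMc 2
    have hηc2 : η * c₀ ^ 2 ≤ c₀ :=
      le_trans (mul_le_mul_of_nonneg_left hcM2 hη.le) hηM
    have hηc1 : η * c₀ ≤ 1 := by
      rw [← mul_le_mul_iff_of_pos_right hc₀, one_mul]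
      calc η * c₀ * c₀ = η * c₀ ^ 2 := by ring
        _ ≤ c₀ := hηc2
    have hfac : 0 ≤ 1 - η * c₀ / 2 := by linarith
    have hint1 : η ^ 2 * (deriv f z) ^ 2 ≤ η ^ 2 * (M ^ 2 * z ^ 2) :=
      mul_le_mul_of_nonneg_left hd2 (sq_nonneg η)
    have hint2 : 2 * η * (c₀ * z ^ 2) ≤ 2 * η * (z * deriv f z) :=
      mul_le_mul_of_nonneg_left h1 (by positivity)
    have hint3 : (η * M ^ 2) * (η * z ^ 2) ≤ c₀ * (η * z ^ 2) :=
      mul_le_mul_of_nonneg_right hηM (by positivity)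
    have hsq : (z - η * deriv f z) ^ 2 ≤ ((1 - η * c₀ / 2) * |z|) ^ 2 := by
      rw [mul_pow, sq_abs]
      linarith [hint1, hint2, hint3, sq_nonneg (η * c₀ * z)]
    calc |z - η * deriv f z| = Real.sqrt ((z - η * deriv f z) ^ 2) :=
          (Real.sqrt_sq_eq_abs _).symm
      _ ≤ Real.sqrt (((1 - η * c₀ / 2) * |z|) ^ 2) := Real.sqrt_le_sqrt hsq
      _ = (1 - η * c₀ / 2) * |z| := Real.sqrt_sq (mul_nonneg hfac (abs_nonneg _))
  -- smallness condition from the exponent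
  have hlogtend : Tendsto (fun η : ℝ => c₀ / 2 * (1 / η) ^ (β - 1)) (𝓝[>] (0:ℝ)) atTop := by
    have h2 : Tendsto (fun η : ℝ => 1 / η) (𝓝[>] (0:ℝ)) atTop := by
      simpa [one_div] using tendsto_inv_nhdsGT_zero (𝕜 := ℝ)
    have h3 : Tendsto (fun η : ℝ => (1 / η) ^ (β - 1)) (𝓝[>] (0:ℝ)) atTop :=
      (tendsto_rpow_atTop (by linarith : (0:ℝ) < β - 1)).comp h2
    exact h3.const_mul_atTop (by positivity : (0:ℝ) < c₀ / 2)
  have hev : ∀ᶠ η in 𝓝[>] (0:ℝ), Real.log 2 ≤ c₀ / 2 * (1 / η) ^ (β - 1) :=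
    hlogtend.eventually_ge_atTop _
  obtain ⟨u, hu, huI⟩ := mem_nhdsGT_iff_exists_Ioo_subset.mp hev
  rw [mem_Ioi] at hu
  refine ⟨min u (c₀ / M ^ 2), lt_min hu (by positivity), ?_⟩
  rintro η ⟨hη0, hη1⟩ x hx y hy0 hyrec
  have hηu : η < u := lt_of_lt_of_le hη1 (min_le_left _ _)
  have hηM : η * M ^ 2 ≤ c₀ := by
    have h := lt_of_lt_of_le hη1 (min_le_right _ _)
    rw [lt_div_iff₀ (by positivity)] at h
    exact le_of_lt h
  have hcM2 : c₀ ^ 2 ≤ M ^ 2 := pow_le_pow_left₀ hc₀.le hMc 2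
  have hηc2 : η * c₀ ^ 2 ≤ c₀ :=
    le_trans (mul_le_mul_of_nonneg_left hcM2 hη0.le) hηM
  have hηc1 : η * c₀ ≤ 1 := by
    rw [← mul_le_mul_iff_of_pos_right hc₀, one_mul]
    calc η * c₀ * c₀ = η * c₀ ^ 2 := by ring
      _ ≤ c₀ := hηc2
  have hηcpos : 0 ≤ η * c₀ := mul_nonneg hη0.le hc₀.le
  have hfac0 : 0 ≤ 1 - η * c₀ / 2 := by linarith
  have hfac1 : 1 - η * c₀ / 2 ≤ 1 := by linarith
  -- stay in the 2ε-ball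
  have h2ε : ∀ n : ℕ, |y n| ≤ 2 * ε := by
    intro n
    induction n with
    | zero => rw [hy0]; exact hx
    | succ n ih =>
        rw [hyrec n]
        calc |y n - η * deriv f (y n)| ≤ (1 - η * c₀ / 2) * |y n| :=
              hstep η hη0 hηM _ ih
          _ ≤ 1 * |y n| := mul_le_mul_of_nonneg_right hfac1 (abs_nonneg _)
          _ ≤ 2 * ε := by rw [one_mul]; exact ih
  have hdec : ∀ n : ℕ, |y (n + 1)| ≤ |y n| := by
    intro n
    rw [hyrec n]
    calc |y n - η * deriv f (y n)| ≤ (1 - η * c₀ / 2) * |y n| :=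
          hstep η hη0 hηM _ (h2ε n)
      _ ≤ 1 * |y n| := mul_le_mul_of_nonneg_right hfac1 (abs_nonneg _)
      _ = |y n| := one_mul _
  refine ⟨h2ε, hdec, ?_⟩
  -- geometric decay
  have hgeo : ∀ n : ℕ, |y n| ≤ (1 - η * c₀ / 2) ^ n * (2 * ε) := by
    intro n
    induction n with
    | zero => simpa [hy0] using hx
    | succ n ih =>
        rw [hyrec n]
        calc |y n - η * deriv f (y n)| ≤ (1 - η * c₀ / 2) * |y n| :=
              hstep η hη0 hηM _ (h2ε n)
          _ ≤ (1 - η * c₀ / 2) * ((1 - η * c₀ / 2) ^ n * (2 * ε)) :=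
              mul_le_mul_of_nonneg_left ih hfac0
          _ = (1 - η * c₀ / 2) ^ (n + 1) * (2 * ε) := by ring
  set N : ℕ := ⌈(1 / η) ^ β⌉₊ with hN
  set t : ℝ := η * c₀ / 2 with htdef
  have ht0 : 0 ≤ t := by positivity
  have hNβ : (1 / η) ^ β ≤ (N : ℝ) := Nat.le_ceil _
  have h1η : (0:ℝ) < 1 / η := by positivity
  have hsplit : (1 / η) ^ β = (1 / η) ^ (β - 1) * (1 / η) := by
    have h := Real.rpow_add h1η (β - 1) 1
    simpa [Real.rpow_one, sub_add_cancel] using h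
  have ht1 : t * (1 / η) ^ β = c₀ / 2 * (1 / η) ^ (β - 1) := by
    rw [htdef, hsplit]
    field_simp
  have hlog2 : Real.log 2 ≤ t * (N : ℝ) := by
    have h1 : Real.log 2 ≤ c₀ / 2 * (1 / η) ^ (β - 1) := huI ⟨hη0, hηu⟩
    have h2 : t * (1 / η) ^ β ≤ t * (N : ℝ) := mul_le_mul_of_nonneg_left hNβ ht0
    rw [ht1] at h2
    linarith
  have hexp : (1 - t) ^ N ≤ Real.exp (-(t * N)) := by
    calc (1 - t) ^ N ≤ Real.exp (-t) ^ N :=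
          pow_le_pow_left₀ (by rw [htdef] at hfac0 ⊢; linarith)
            (by linarith [Real.add_one_le_exp (-t)]) N
      _ = Real.exp (-(t * N)) := by
          rw [← Real.exp_nat_mul]; congr 1; ring
  have hhalf : Real.exp (-(t * N)) ≤ 1 / 2 := by
    have h : Real.exp (-(t * N)) ≤ Real.exp (-Real.log 2) :=
      Real.exp_le_exp.mpr (by linarith)
    rw [Real.exp_neg (Real.log 2), Real.exp_log (by norm_num : (0:ℝ) < 2)] at h
    linarith
  have hfin := hgeo N
  have : (1 - t) ^ N * (2 * ε) ≤ (1 / 2) * (2 * ε) :=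
    mul_le_mul_of_nonneg_right (le_trans hexp hhalf) (by positivity)
  have hfac0' : (1 : ℝ) - η * c₀ / 2 = 1 - t := by rw [htdef]
  rw [hfac0'] at hfin
  calc |y N| ≤ (1 - t) ^ N * (2 * ε) := hfin
    _ ≤ (1 / 2) * (2 * ε) := this
    _ = ε := by ring
end
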